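/- arXiv:2309.14607 — 2 statements merged into one kernel-verified Lean document; each statement's English description precedes it below -/
import Mathlib

section
/- Let 0 < p ≤ 1, let X be a p-Banach space over 𝔽 = ℝ or ℂ, and let 𝒳 be a basis of X that is C_pg-RGPCC. Then 𝒳 is unconditional with unconditionality constant K ≤ C_pg; in particular ‖f‖ ≤ C_pg·‖f + g‖ for all f, g ∈ X with supp(f) ∩ supp(g) = ∅. -/
open scoped BigOperators

noncomputable section

/-- A basis of a `p`-Banach space over `𝕜` (`𝕜 = ℝ` or `ℂ`), bundled with the `p`-norm
`N`, the basis vectors `e`, and the biorthogonal functionals `coord`. -/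
structure PBasis (𝕜 : Type*) [RCLike 𝕜] (X : Type*) [AddCommGroup X] [Module 𝕜 X]
    (p : ℝ) : Type _ where
  /-- the `p`-norm of the space -/
  N : X → ℝ
  N_nonneg : ∀ f : X, 0 ≤ N f
  N_eq_zero_iff : ∀ f : X, N f = 0 ↔ f = 0
  N_smul : ∀ (t : 𝕜) (f : X), N (t • f) = ‖t‖ * N f
  N_padd : ∀ f g : X, N (f + g) ^ p ≤ N f ^ p + N g ^ p
  /-- completeness with respect to the `p`-norm -/
  complete : ∀ u : ℕ → X,
      (∀ ε : ℝ, 0 < ε → ∃ n₀ : ℕ, ∀ m n : ℕ, n₀ ≤ m → n₀ ≤ n → N (u m - u n) < ε) →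
      ∃ f : X, ∀ ε : ℝ, 0 < ε → ∃ n₀ : ℕ, ∀ n : ℕ, n₀ ≤ n → N (u n - f) < ε
  /-- the basis vectors -/
  e : ℕ → X
  /-- the biorthogonal functionals -/
  coord : ℕ → X →ₗ[𝕜] 𝕜
  biorth : ∀ n m : ℕ, coord n (e m) = if n = m then (1 : 𝕜) else 0
  /-- the closed linear span of the basis vectors is the whole space -/
  dense_span : ∀ f : X, ∀ ε : ℝ, 0 < ε →
      ∃ g ∈ Submodule.span 𝕜 (Set.range e), N (f - g) < ε
  e_bdd : ∃ c : ℝ, ∀ n : ℕ, N (e n) ≤ c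
  coord_bdd : ∃ c : ℝ, ∀ (n : ℕ) (f : X), ‖coord n f‖ ≤ c * N f

namespace PBasis

variable {𝕜 : Type*} [RCLike 𝕜] {X : Type*} [AddCommGroup X] [Module 𝕜 X] {p : ℝ}

/-- The projection `P_A f = ∑_{n ∈ A} x_n^*(f) x_n`. -/
def proj (bs : PBasis 𝕜 X p) (A : Finset ℕ) (f : X) : X :=
  ∑ n ∈ A, bs.coord n f • bs.e n

/-- The support of `f`. -/
def supp (bs : PBasis 𝕜 X p) (f : X) : Set ℕ := {n | bs.coord n f ≠ 0}

/-- `A` is a greedy set of `f`: `min_{n ∈ A} |x_n^*(f)| ≥ max_{m ∉ A} |x_m^*(f)|`. -/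
def IsGreedySet (bs : PBasis 𝕜 X p) (f : X) (A : Finset ℕ) : Prop :=
  ∀ n ∈ A, ∀ m : ℕ, m ∉ A → ‖bs.coord m f‖ ≤ ‖bs.coord n f‖

/-- `𝟙_{ε,A} = ∑_{j ∈ A} ε_j x_j`. -/
def indSign (bs : PBasis 𝕜 X p) (ε : ℕ → 𝕜) (A : Finset ℕ) : X :=
  ∑ j ∈ A, ε j • bs.e j

/-- `𝟙_A = ∑_{j ∈ A} x_j`. -/
def ind (bs : PBasis 𝕜 X p) (A : Finset ℕ) : X := ∑ j ∈ A, bs.e j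

/-- `ε` is a sign on `A`. -/
def IsSign (ε : ℕ → 𝕜) (A : Finset ℕ) : Prop := ∀ j ∈ A, ‖ε j‖ = 1

/-- `min_{n ∈ A} |x_n^*(f)|`. -/
def minCoef (bs : PBasis 𝕜 X p) (f : X) (A : Finset ℕ) : ℝ :=
  sInf ((fun n => ‖bs.coord n f‖) '' (A : Set ℕ))

/-- `‖f − P_A(f)‖ ≤ C·σ_m(f)` for every greedy set `A` of cardinality `m`. -/
def IsGreedyWith (bs : PBasis 𝕜 X p) (C : ℝ) : Prop :=
  ∀ (f : X) (A B : Finset ℕ) (a : ℕ → 𝕜), bs.IsGreedySet f A → B.card ≤ A.card →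
    bs.N (f - bs.proj A f) ≤ C * bs.N (f - ∑ j ∈ B, a j • bs.e j)

/-- `‖f − P_A(f)‖ ≤ C·ρ_m(f)` for every greedy set `A` of cardinality `m`, where
`ρ_m(f) = inf {‖f − α 𝟙_{ε,B}‖ : |B| = m, ε sign}` and `α = min_{n ∈ A} |x_n^*(f)|`. -/
def IsRGPCCWith (bs : PBasis 𝕜 X p) (C : ℝ) : Prop :=
  ∀ (f : X) (A B : Finset ℕ) (ε : ℕ → 𝕜), bs.IsGreedySet f A → B.card = A.card →
    IsSign ε B →
    bs.N (f - bs.proj A f) ≤ C * bs.N (f - ((bs.minCoef f A : ℝ) : 𝕜) • bs.indSign ε B)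

/-- `‖f − P_A(f)‖ ≤ C·ϱ_m(f)` for every greedy set `A` of cardinality `m`, where
`ϱ_m(f) = inf {‖f − α 𝟙_B‖ : |B| = m}` and `α = min_{n ∈ A} |x_n^*(f)|`. -/
def IsURGPCCWith (bs : PBasis 𝕜 X p) (C : ℝ) : Prop :=
  ∀ (f : X) (A B : Finset ℕ), bs.IsGreedySet f A → B.card = A.card →
    bs.N (f - bs.proj A f) ≤ C * bs.N (f - ((bs.minCoef f A : ℝ) : 𝕜) • bs.ind B)

/-- `K`-unconditionality. -/
def IsUncondWith (bs : PBasis 𝕜 X p) (K : ℝ) : Prop :=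
  ∀ (A : Finset ℕ) (f : X), bs.N (bs.proj A f) ≤ K * bs.N f

/-- `C`-quasi-greediness. -/
def IsQuasiGreedyWith (bs : PBasis 𝕜 X p) (C : ℝ) : Prop :=
  ∀ (f : X) (A : Finset ℕ), bs.IsGreedySet f A → bs.N (f - bs.proj A f) ≤ C * bs.N f

/-- `C`-almost-greediness. -/
def IsAlmostGreedyWith (bs : PBasis 𝕜 X p) (C : ℝ) : Prop :=
  ∀ (f : X) (A B : Finset ℕ), bs.IsGreedySet f A → B.card ≤ A.card →
    bs.N (f - bs.proj A f) ≤ C * bs.N (f - bs.proj B f)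

/-- `D`-democracy. -/
def IsDemocraticWith (bs : PBasis 𝕜 X p) (D : ℝ) : Prop :=
  ∀ A B : Finset ℕ, A.card ≤ B.card → bs.N (bs.ind A) ≤ D * bs.N (bs.ind B)

/-- `D`-superdemocracy. -/
def IsSuperdemocraticWith (bs : PBasis 𝕜 X p) (D : ℝ) : Prop :=
  ∀ (A B : Finset ℕ) (ε η : ℕ → 𝕜), A.card ≤ B.card → IsSign ε A → IsSign η B →
    bs.N (bs.indSign ε A) ≤ D * bs.N (bs.indSign η B)

/-- `A < B`, i.e. every element of `A` is smaller than every element of `B`. -/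
def FinsetBefore (A B : Finset ℕ) : Prop := ∀ a ∈ A, ∀ b ∈ B, a < b

open scoped Classical in
/-- `sgn z = z/|z|` (with the convention `sgn 0 = 1`). -/
def sgn (z : 𝕜) : 𝕜 := if z = 0 then 1 else z / ((‖z‖ : ℝ) : 𝕜)

variable (bs : PBasis 𝕜 X p)

lemma N_zero : bs.N 0 = 0 := (bs.N_eq_zero_iff 0).2 rfl

lemma N_neg (f : X) : bs.N (-f) = bs.N f := by
  have := bs.N_smul (-1 : 𝕜) f
  simpa using this

lemma N_sub_comm (f g : X) : bs.N (f - g) = bs.N (g - f) := by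
  rw [← bs.N_neg (f - g), neg_sub]

lemma norm_sgn (z : 𝕜) : ‖PBasis.sgn z‖ = 1 := by
  unfold PBasis.sgn
  split_ifs with h
  · simp
  · rw [norm_div, RCLike.norm_ofReal, abs_norm, div_self (norm_ne_zero_iff.2 h)]
lemma sgn_mul_norm (z : 𝕜) : PBasis.sgn z * ((‖z‖ : ℝ) : 𝕜) = z := by
  unfold PBasis.sgn
  split_ifs with h
  · simp [h]
  · have : ((‖z‖ : ℝ) : 𝕜) ≠ 0 := by
      simp [h]
    field_simp

lemma N_smul_real (r : ℝ) (f : X) : bs.N (((r : ℝ) : 𝕜) • f) = |r| * bs.N f := by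
  rw [bs.N_smul, RCLike.norm_ofReal]

lemma coord_indSign (ε : ℕ → 𝕜) (A : Finset ℕ) (n : ℕ) :
    bs.coord n (bs.indSign ε A) = if n ∈ A then ε n else 0 := by
  classical
  unfold PBasis.indSign
  rw [map_sum]
  simp only [map_smul, bs.biorth, smul_eq_mul]
  rw [Finset.sum_ite_eq' A n ε |>.symm]
  · apply Finset.sum_congr rfl
    intro j hj
    by_cases hnj : n = j
    · subst hnj; simp
    · simp [hnj, Ne.symm hnj]

lemma N_sum_p (hp : 0 < p) {ι : Type*} (s : Finset ι) (v : ι → X) :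
    bs.N (∑ i ∈ s, v i) ^ p ≤ ∑ i ∈ s, bs.N (v i) ^ p := by
  classical
  induction s using Finset.induction_on with
  | empty => simp [bs.N_zero, Real.zero_rpow hp.ne']
  | insert a s' hx ih =>
    rw [Finset.sum_insert hx, Finset.sum_insert hx]
    calc bs.N (v a + ∑ i ∈ s', v i) ^ p ≤ bs.N (v a) ^ p + bs.N (∑ i ∈ s', v i) ^ p :=
          bs.N_padd _ _
      _ ≤ _ := by linarith

lemma N_padd_sub (hp : 0 < p) (f g : X) : bs.N f ^ p ≤ bs.N (f - g) ^ p + bs.N g ^ p := by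
  have := bs.N_padd (f - g) g
  simpa using this

lemma minCoef_le (f : X) {A : Finset ℕ} {n : ℕ} (hn : n ∈ A) :
    bs.minCoef f A ≤ ‖bs.coord n f‖ := by
  apply csInf_le
  · exact (A.finite_toSet.image _).bddBelow
  · exact ⟨n, hn, rfl⟩

lemma minCoef_nonneg (f : X) {A : Finset ℕ} (hA : A.Nonempty) :
    0 ≤ bs.minCoef f A := by
  apply le_csInf
  · exact ⟨_, ⟨hA.choose, hA.choose_spec, rfl⟩⟩
  · rintro _ ⟨n, -, rfl⟩; exact norm_nonneg _

lemma minCoef_shift {f g : X} {A : Finset ℕ} (hA : A.Nonempty) (t : ℝ)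
    (hfg : ∀ n ∈ A, ‖bs.coord n g‖ = ‖bs.coord n f‖ + t) :
    bs.minCoef g A = bs.minCoef f A + t := by
  apply le_antisymm
  · have hmem : bs.minCoef f A ∈ (fun n => ‖bs.coord n f‖) '' (A : Set ℕ) := by
      apply Set.Nonempty.csInf_mem
      · exact ⟨_, ⟨hA.choose, hA.choose_spec, rfl⟩⟩
      · exact A.finite_toSet.image _
    obtain ⟨n, hn, hval⟩ := hmem
    simp only at hval
    calc bs.minCoef g A ≤ ‖bs.coord n g‖ := bs.minCoef_le g hn
      _ = bs.minCoef f A + t := by rw [hfg n hn, hval]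
  · apply le_csInf
    · exact ⟨_, ⟨hA.choose, hA.choose_spec, rfl⟩⟩
    · rintro _ ⟨n, hn, rfl⟩
      simp only
      rw [hfg n hn]
      have := bs.minCoef_le f hn
      linarith

lemma proj_add (A : Finset ℕ) (f g : X) :
    bs.proj A (f + g) = bs.proj A f + bs.proj A g := by
  unfold PBasis.proj
  rw [← Finset.sum_add_distrib]
  apply Finset.sum_congr rfl
  intro n _
  rw [map_add, add_smul]

lemma proj_sub (A : Finset ℕ) (f g : X) :
    bs.proj A (f - g) = bs.proj A f - bs.proj A g := by
  unfold PBasis.proj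
  rw [← Finset.sum_sub_distrib]
  apply Finset.sum_congr rfl
  intro n _
  rw [map_sub, sub_smul]

lemma proj_union {A B : Finset ℕ} (hAB : Disjoint A B) (f : X) :
    bs.proj (A ∪ B) f = bs.proj A f + bs.proj B f := by
  unfold PBasis.proj
  exact Finset.sum_union hAB

lemma proj_congr_zero {A : Finset ℕ} {T : Finset ℕ} (f : X) (hT : ∀ n ∉ T, bs.coord n f = 0) :
    bs.proj A f = bs.proj (A ∩ T) f := by
  classical
  unfold PBasis.proj
  rw [← Finset.sum_filter_add_sum_filter_not A (fun n => n ∈ T)]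
  have h1 : A.filter (fun n => n ∈ T) = A ∩ T := by
    ext n; simp [Finset.mem_inter, Finset.mem_filter]
  have h2 : ∑ n ∈ A.filter (fun n => ¬ n ∈ T), bs.coord n f • bs.e n = 0 := by
    apply Finset.sum_eq_zero
    intro n hn
    rw [hT n (Finset.mem_filter.1 hn).2, zero_smul]
  rw [h1, h2, add_zero]

lemma span_rep {g : X} (hg : g ∈ Submodule.span 𝕜 (Set.range bs.e)) :
    ∃ T : Finset ℕ, g = bs.proj T g ∧ ∀ n ∉ T, bs.coord n g = 0 := by
  classical
  induction hg using Submodule.span_induction with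
  | mem x hx =>
    obtain ⟨m, rfl⟩ := hx
    refine ⟨{m}, ?_, ?_⟩
    · unfold PBasis.proj
      simp [bs.biorth]
    · intro n hn
      rw [bs.biorth]
      simp only [Finset.mem_singleton] at hn
      simp [hn]
  | zero => exact ⟨∅, by unfold PBasis.proj; simp, fun n _ => by rw [map_zero]⟩
  | add x y hx hy ihx ihy =>
    obtain ⟨T1, hT1, hT1'⟩ := ihx
    obtain ⟨T2, hT2, hT2'⟩ := ihy
    refine ⟨T1 ∪ T2, ?_, ?_⟩
    · rw [bs.proj_add]
      have e1 : bs.proj (T1 ∪ T2) x = bs.proj ((T1 ∪ T2) ∩ T1) x := bs.proj_congr_zero x hT1'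
      have e2 : bs.proj (T1 ∪ T2) y = bs.proj ((T1 ∪ T2) ∩ T2) y := bs.proj_congr_zero y hT2'
      have i1 : (T1 ∪ T2) ∩ T1 = T1 := by
        ext n; simp only [Finset.mem_inter, Finset.mem_union]; tauto
      have i2 : (T1 ∪ T2) ∩ T2 = T2 := by
        ext n; simp only [Finset.mem_inter, Finset.mem_union]; tauto
      rw [e1, e2, i1, i2, ← hT1, ← hT2]
    · intro n hn
      simp only [Finset.mem_union, not_or] at hn
      rw [map_add, hT1' n hn.1, hT2' n hn.2, add_zero]
  | smul a x hx ihx =>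
    obtain ⟨T, hT, hT'⟩ := ihx
    refine ⟨T, ?_, ?_⟩
    · unfold PBasis.proj at hT ⊢
      conv_lhs => rw [hT]
      rw [Finset.smul_sum]
      apply Finset.sum_congr rfl
      intro n _
      rw [map_smul, smul_eq_mul, mul_smul]
    · intro n hn
      rw [map_smul, hT' n hn, smul_zero]

lemma exists_small_coord (f : X) (A : Finset ℕ) {η : ℝ} (hη : 0 < η) {cs : ℝ}
    (hcs : ∀ (n : ℕ) (g : X), ‖bs.coord n g‖ ≤ cs * bs.N g) (hcs0 : 0 ≤ cs) :
    ∃ n ∉ A, ‖bs.coord n f‖ < η := by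
  obtain ⟨g, hgspan, hgN⟩ := bs.dense_span f (η / (cs + 1)) (by positivity)
  obtain ⟨T, -, hT⟩ := bs.span_rep hgspan
  obtain ⟨n, hn⟩ := Infinite.exists_notMem_finset (A ∪ T)
  simp only [Finset.mem_union, not_or] at hn
  refine ⟨n, hn.1, ?_⟩
  have : bs.coord n f = bs.coord n (f - g) := by
    rw [map_sub, hT n hn.2, sub_zero]
  rw [this]
  calc ‖bs.coord n (f - g)‖ ≤ cs * bs.N (f - g) := hcs n _
    _ ≤ cs * (η / (cs + 1)) := by
        apply mul_le_mul_of_nonneg_left (le_of_lt hgN) hcs0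
    _ < η := by
        rw [div_eq_inv_mul, ← mul_assoc]
        have : cs * (cs + 1)⁻¹ < 1 := by
          rw [mul_inv_lt_iff₀ (by positivity), one_mul]; linarith
        nlinarith

lemma proj_smul (A : Finset ℕ) (c : 𝕜) (f : X) :
    bs.proj A (c • f) = c • bs.proj A f := by
  unfold PBasis.proj
  rw [Finset.smul_sum]
  apply Finset.sum_congr rfl
  intro n _
  rw [map_smul, smul_eq_mul, mul_smul]

lemma proj_indSign (ε : ℕ → 𝕜) (A : Finset ℕ) :
    bs.proj A (bs.indSign ε A) = bs.indSign ε A := by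
  have : bs.proj A (bs.indSign ε A) = ∑ n ∈ A, ε n • bs.e n :=
    Finset.sum_congr rfl (fun n hn => by rw [bs.coord_indSign, if_pos hn])
  rw [this]; rfl

lemma key1 {C : ℝ} (hrg : bs.IsRGPCCWith C) {cs : ℝ} (hcs0 : 0 ≤ cs)
    (hcs : ∀ (n : ℕ) (g : X), ‖bs.coord n g‖ ≤ cs * bs.N g) (f : X) {A : Finset ℕ}
    (hA : A.Nonempty) :
    bs.N (f - bs.proj A f) ≤
      C * bs.N (f - ((bs.minCoef f A : ℝ) : 𝕜) •
        bs.indSign (fun n => PBasis.sgn (bs.coord n f)) A) := by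
  set ε : ℕ → 𝕜 := fun n => PBasis.sgn (bs.coord n f) with hε
  set t : ℝ := cs * bs.N f with htdef
  have ht : 0 ≤ t := mul_nonneg hcs0 (bs.N_nonneg f)
  set g : X := f + ((t : ℝ) : 𝕜) • bs.indSign ε A with hg
  have coordg : ∀ n : ℕ, bs.coord n g =
      bs.coord n f + ((t : ℝ) : 𝕜) * (if n ∈ A then ε n else 0) := by
    intro n
    rw [hg, map_add, map_smul, bs.coord_indSign, smul_eq_mul]
  have normg_on : ∀ n ∈ A, ‖bs.coord n g‖ = ‖bs.coord n f‖ + t := by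
    intro n hn
    rw [coordg n, if_pos hn, hε]
    set z := bs.coord n f with hz
    have key : z + ((t : ℝ) : 𝕜) * PBasis.sgn z = PBasis.sgn z * ((‖z‖ + t : ℝ) : 𝕜) := by
      push_cast
      rw [mul_add, PBasis.sgn_mul_norm]
      ring
    rw [key, norm_mul, PBasis.norm_sgn, one_mul, RCLike.norm_ofReal,
      abs_of_nonneg (by positivity)]
  have normg_off : ∀ m ∉ A, bs.coord m g = bs.coord m f := by
    intro m hm
    rw [coordg m, if_neg hm, mul_zero, add_zero]
  have greedy : bs.IsGreedySet g A := by
    intro n hn m hm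
    rw [normg_on n hn, normg_off m hm]
    have h1 : ‖bs.coord m f‖ ≤ t := htdef ▸ hcs m f
    have h2 : (0:ℝ) ≤ ‖bs.coord n f‖ := norm_nonneg _
    linarith
  have sign : PBasis.IsSign ε A := fun j _ => PBasis.norm_sgn _
  have hmc : bs.minCoef g A = bs.minCoef f A + t := bs.minCoef_shift hA t normg_on
  have main := hrg g A A ε greedy rfl sign
  have projg : bs.proj A g = bs.proj A f + ((t : ℝ) : 𝕜) • bs.indSign ε A := by
    rw [hg, bs.proj_add, bs.proj_smul, bs.proj_indSign]
  have lhs_eq : g - bs.proj A g = f - bs.proj A f := by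
    rw [projg, hg]; abel
  have rhs_eq : g - ((bs.minCoef g A : ℝ) : 𝕜) • bs.indSign ε A =
      f - ((bs.minCoef f A : ℝ) : 𝕜) • bs.indSign ε A := by
    rw [hmc, hg]
    push_cast
    rw [add_smul]
    abel
  rw [lhs_eq, rhs_eq] at main
  exact main

lemma N_sub_p (hp : 0 < p) (f g : X) : bs.N (f - g) ^ p ≤ bs.N f ^ p + bs.N g ^ p := by
  rw [sub_eq_add_neg]
  calc bs.N (f + -g) ^ p ≤ bs.N f ^ p + bs.N (-g) ^ p := bs.N_padd f (-g)
    _ = bs.N f ^ p + bs.N g ^ p := by rw [bs.N_neg]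

lemma N_indSign_p (hp : 0 < p) {ce : ℝ} (hce : ∀ n, bs.N (bs.e n) ≤ ce)
    {ε : ℕ → 𝕜} {A : Finset ℕ} (hsign : PBasis.IsSign ε A) :
    bs.N (bs.indSign ε A) ^ p ≤ (A.card : ℝ) * ce ^ p := by
  have hce0 : 0 ≤ ce := le_trans (bs.N_nonneg _) (hce 0)
  calc bs.N (bs.indSign ε A) ^ p ≤ ∑ j ∈ A, bs.N (ε j • bs.e j) ^ p :=
        bs.N_sum_p hp A _
    _ ≤ ∑ _j ∈ A, ce ^ p := by
        apply Finset.sum_le_sum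
        intro j hj
        rw [bs.N_smul, hsign j hj, one_mul]
        exact Real.rpow_le_rpow (bs.N_nonneg _) (hce j) hp.le
    _ = (A.card : ℝ) * ce ^ p := by rw [Finset.sum_const, nsmul_eq_mul]

set_option maxHeartbeats 1000000 in
lemma suppression (hp : 0 < p) {C : ℝ} (hC1 : 1 ≤ C) (hrg : bs.IsRGPCCWith C)
    {cs : ℝ} (hcs0 : 0 ≤ cs) (hcs : ∀ (n : ℕ) (g : X), ‖bs.coord n g‖ ≤ cs * bs.N g)
    {ce : ℝ} (hce : ∀ n, bs.N (bs.e n) ≤ ce) (f : X) (A : Finset ℕ) :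
    bs.N (f - bs.proj A f) ≤ C * bs.N f := by
  have hce0 : 0 ≤ ce := le_trans (bs.N_nonneg _) (hce 0)
  have hC0 : (0:ℝ) < C := lt_of_lt_of_le one_pos hC1
  have hb0 : 0 ≤ C * bs.N f := mul_nonneg hC0.le (bs.N_nonneg f)
  rw [← Real.rpow_le_rpow_iff (bs.N_nonneg _) hb0 hp]
  apply le_of_forall_pos_le_add
  intro εp hεp
  set K : ℝ := C ^ p * ((A.card : ℝ) + 1) * ce ^ p + ce ^ p + 1 with hK
  have hcp : (0:ℝ) ≤ C ^ p := Real.rpow_nonneg hC0.le p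
  have hcep : (0:ℝ) ≤ ce ^ p := Real.rpow_nonneg hce0 p
  have hm : (0:ℝ) ≤ (A.card : ℝ) + 1 := by positivity
  have hK1 : 1 ≤ K := by nlinarith [mul_nonneg (mul_nonneg hcp hm) hcep]
  have hK0 : (0:ℝ) < K := lt_of_lt_of_le one_pos hK1
  set η : ℝ := (εp / K) ^ (1 / p) with hηdef
  have hη : 0 < η := Real.rpow_pos_of_pos (div_pos hεp hK0) _
  have hηp : η ^ p = εp / K := by
    rw [hηdef, ← Real.rpow_mul (div_pos hεp hK0).le, one_div,
      inv_mul_cancel₀ hp.ne', Real.rpow_one]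
  obtain ⟨n₀, hn₀A, hn₀⟩ := bs.exists_small_coord f A hη hcs hcs0
  set A' : Finset ℕ := insert n₀ A with hA'def
  have hA' : A'.Nonempty := Finset.insert_nonempty _ _
  set δ : ℝ := bs.minCoef f A' with hδdef
  have hδ0 : 0 ≤ δ := bs.minCoef_nonneg f hA'
  have hδη : δ < η :=
    lt_of_le_of_lt (bs.minCoef_le f (Finset.mem_insert_self n₀ A)) hn₀
  set ε : ℕ → 𝕜 := fun n => PBasis.sgn (bs.coord n f) with hε
  have hsign : PBasis.IsSign ε A' := fun j _ => PBasis.norm_sgn _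
  -- step 1
  have hid : f - bs.proj A f = (f - bs.proj A' f) + bs.coord n₀ f • bs.e n₀ := by
    have : bs.proj A' f = bs.coord n₀ f • bs.e n₀ + bs.proj A f :=
      Finset.sum_insert hn₀A
    rw [this]; abel
  have step1 : bs.N (f - bs.proj A f) ^ p ≤
      bs.N (f - bs.proj A' f) ^ p + η ^ p * ce ^ p := by
    rw [hid]
    refine le_trans (bs.N_padd _ _) ?_
    have : bs.N (bs.coord n₀ f • bs.e n₀) ≤ η * ce := by
      rw [bs.N_smul]
      exact mul_le_mul hn₀.le (hce n₀) (bs.N_nonneg _) hη.le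
    have h2 : bs.N (bs.coord n₀ f • bs.e n₀) ^ p ≤ (η * ce) ^ p :=
      Real.rpow_le_rpow (bs.N_nonneg _) this hp.le
    rw [Real.mul_rpow hη.le hce0] at h2
    linarith
  -- step 2
  have step2 : bs.N (f - bs.proj A' f) ≤
      C * bs.N (f - ((δ : ℝ) : 𝕜) • bs.indSign ε A') :=
    bs.key1 hrg hcs0 hcs f hA'
  -- step 3
  have step3 : bs.N (f - ((δ : ℝ) : 𝕜) • bs.indSign ε A') ^ p ≤
      bs.N f ^ p + δ ^ p * (((A.card : ℝ) + 1) * ce ^ p) := by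
    refine le_trans (bs.N_sub_p hp _ _) ?_
    have h1 : bs.N (((δ : ℝ) : 𝕜) • bs.indSign ε A') = δ * bs.N (bs.indSign ε A') := by
      rw [bs.N_smul_real, abs_of_nonneg hδ0]
    rw [h1, Real.mul_rpow hδ0 (bs.N_nonneg _)]
    have h2 : bs.N (bs.indSign ε A') ^ p ≤ ((A.card : ℝ) + 1) * ce ^ p := by
      refine le_trans (bs.N_indSign_p hp hce hsign) ?_
      have : (A'.card : ℝ) ≤ (A.card : ℝ) + 1 := by
        exact_mod_cast Finset.card_insert_le n₀ A
      nlinarith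
    have hδp : (0:ℝ) ≤ δ ^ p := Real.rpow_nonneg hδ0 p
    nlinarith
  -- combine
  have step2p : bs.N (f - bs.proj A' f) ^ p ≤
      C ^ p * bs.N (f - ((δ : ℝ) : 𝕜) • bs.indSign ε A') ^ p := by
    have := Real.rpow_le_rpow (bs.N_nonneg _) step2 hp.le
    rwa [Real.mul_rpow hC0.le (bs.N_nonneg _)] at this
  have hδpηp : δ ^ p ≤ η ^ p := Real.rpow_le_rpow hδ0 hδη.le hp.le
  have hfinal : η ^ p * (C ^ p * (((A.card : ℝ) + 1) * ce ^ p) + ce ^ p) ≤ εp := by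
    rw [hηp, div_mul_eq_mul_div, div_le_iff₀ hK0]
    nlinarith
  have hNfp : (0:ℝ) ≤ bs.N f ^ p := Real.rpow_nonneg (bs.N_nonneg f) p
  rw [Real.mul_rpow hC0.le (bs.N_nonneg f)]
  have hηp0 : (0:ℝ) ≤ η ^ p := Real.rpow_nonneg hη.le p
  nlinarith [mul_le_mul_of_nonneg_left hδpηp (mul_nonneg hcp (mul_nonneg hm hcep)),
    mul_le_mul_of_nonneg_left step3 hcp]

lemma N_proj_p (hp : 0 < p) {cs : ℝ} (hcs0 : 0 ≤ cs)
    (hcs : ∀ (n : ℕ) (g : X), ‖bs.coord n g‖ ≤ cs * bs.N g)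
    {ce : ℝ} (hce : ∀ n, bs.N (bs.e n) ≤ ce) (A : Finset ℕ) (h : X) :
    bs.N (bs.proj A h) ^ p ≤ (A.card : ℝ) * ((cs * ce) ^ p * bs.N h ^ p) := by
  have hce0 : 0 ≤ ce := le_trans (bs.N_nonneg _) (hce 0)
  calc bs.N (bs.proj A h) ^ p ≤ ∑ n ∈ A, bs.N (bs.coord n h • bs.e n) ^ p :=
        bs.N_sum_p hp A _
    _ ≤ ∑ _n ∈ A, (cs * ce) ^ p * bs.N h ^ p := by
        apply Finset.sum_le_sum
        intro n _
        rw [bs.N_smul]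
        have h1 : ‖bs.coord n h‖ * bs.N (bs.e n) ≤ cs * ce * bs.N h := by
          have := mul_le_mul (hcs n h) (hce n) (bs.N_nonneg _)
            (mul_nonneg hcs0 (bs.N_nonneg h))
          nlinarith
        calc (‖bs.coord n h‖ * bs.N (bs.e n)) ^ p ≤ (cs * ce * bs.N h) ^ p :=
              Real.rpow_le_rpow (mul_nonneg (norm_nonneg _) (bs.N_nonneg _)) h1 hp.le
          _ = (cs * ce) ^ p * bs.N h ^ p :=
              Real.mul_rpow (mul_nonneg hcs0 hce0) (bs.N_nonneg h)
    _ = (A.card : ℝ) * ((cs * ce) ^ p * bs.N h ^ p) := by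
        rw [Finset.sum_const, nsmul_eq_mul]

set_option maxHeartbeats 1000000 in
lemma uncond (hp : 0 < p) {C : ℝ} (hC1 : 1 ≤ C) (hrg : bs.IsRGPCCWith C)
    {cs : ℝ} (hcs0 : 0 ≤ cs) (hcs : ∀ (n : ℕ) (g : X), ‖bs.coord n g‖ ≤ cs * bs.N g)
    {ce : ℝ} (hce : ∀ n, bs.N (bs.e n) ≤ ce) (A : Finset ℕ) (f : X) :
    bs.N (bs.proj A f) ≤ C * bs.N f := by
  classical
  have hce0 : 0 ≤ ce := le_trans (bs.N_nonneg _) (hce 0)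
  have hC0 : (0:ℝ) < C := lt_of_lt_of_le one_pos hC1
  have hb0 : 0 ≤ C * bs.N f := mul_nonneg hC0.le (bs.N_nonneg f)
  rw [← Real.rpow_le_rpow_iff (bs.N_nonneg _) hb0 hp]
  apply le_of_forall_pos_le_add
  intro εp hεp
  have hcp : (0:ℝ) ≤ C ^ p := Real.rpow_nonneg hC0.le p
  have hccp : (0:ℝ) ≤ (cs * ce) ^ p := Real.rpow_nonneg (mul_nonneg hcs0 hce0) p
  set K : ℝ := C ^ p + (A.card : ℝ) * (cs * ce) ^ p + 1 with hK
  have hK0 : (0:ℝ) < K := by positivity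
  set η : ℝ := (εp / K) ^ (1 / p) with hηdef
  have hη : 0 < η := Real.rpow_pos_of_pos (div_pos hεp hK0) _
  have hηp : η ^ p = εp / K := by
    rw [hηdef, ← Real.rpow_mul (div_pos hεp hK0).le, one_div,
      inv_mul_cancel₀ hp.ne', Real.rpow_one]
  have hηp0 : (0:ℝ) ≤ η ^ p := Real.rpow_nonneg hη.le p
  obtain ⟨g', hg'span, hg'N⟩ := bs.dense_span f η hη
  obtain ⟨T, hTrep, hTzero⟩ := bs.span_rep hg'span
  -- `proj A g' = g' - proj (T \ A) g'`
  have hsplit : bs.proj A g' = g' - bs.proj (T \ A) g' := by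
    have h1 : bs.proj A g' = bs.proj (A ∩ T) g' := bs.proj_congr_zero g' hTzero
    have h2 : (A ∩ T) ∪ (T \ A) = T := by
      ext n; simp only [Finset.mem_union, Finset.mem_inter, Finset.mem_sdiff]; tauto
    have h3 : Disjoint (A ∩ T) (T \ A) := by
      rw [Finset.disjoint_left]
      intro n hn hn'
      exact (Finset.mem_sdiff.1 hn').2 (Finset.mem_inter.1 hn).1
    have h4 : bs.proj (A ∩ T) g' + bs.proj (T \ A) g' = g' := by
      rw [← bs.proj_union h3, h2, ← hTrep]
    exact h1.trans (eq_sub_of_add_eq h4)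
  have hg'bound : bs.N (bs.proj A g') ≤ C * bs.N g' := by
    rw [hsplit]
    exact bs.suppression hp hC1 hrg hcs0 hcs hce g' (T \ A)
  -- combine
  have hdecomp : bs.proj A f = bs.proj A g' + bs.proj A (f - g') := by
    rw [← bs.proj_add]
    congr 1
    abel
  have step1 : bs.N (bs.proj A f) ^ p ≤
      bs.N (bs.proj A g') ^ p + bs.N (bs.proj A (f - g')) ^ p := by
    rw [hdecomp]; exact bs.N_padd _ _
  have step2 : bs.N (bs.proj A g') ^ p ≤ C ^ p * bs.N g' ^ p := by
    have := Real.rpow_le_rpow (bs.N_nonneg _) hg'bound hp.le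
    rwa [Real.mul_rpow hC0.le (bs.N_nonneg _)] at this
  have step3 : bs.N g' ^ p ≤ bs.N f ^ p + η ^ p := by
    have h1 : bs.N g' ^ p ≤ bs.N (g' - f) ^ p + bs.N f ^ p := bs.N_padd_sub hp g' f
    have h2 : bs.N (g' - f) ^ p ≤ η ^ p := by
      rw [bs.N_sub_comm]
      exact Real.rpow_le_rpow (bs.N_nonneg _) hg'N.le hp.le
    linarith
  have step4 : bs.N (bs.proj A (f - g')) ^ p ≤ (A.card : ℝ) * ((cs * ce) ^ p * η ^ p) := by
    refine le_trans (bs.N_proj_p hp hcs0 hcs hce A (f - g')) ?_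
    have : bs.N (f - g') ^ p ≤ η ^ p :=
      Real.rpow_le_rpow (bs.N_nonneg _) hg'N.le hp.le
    have hc : (0:ℝ) ≤ (A.card : ℝ) := Nat.cast_nonneg _
    exact mul_le_mul_of_nonneg_left (mul_le_mul_of_nonneg_left this hccp) hc
  have hfinal : η ^ p * (C ^ p + (A.card : ℝ) * (cs * ce) ^ p) ≤ εp := by
    rw [hηp, div_mul_eq_mul_div, div_le_iff₀ hK0]
    nlinarith
  rw [Real.mul_rpow hC0.le (bs.N_nonneg f)]
  have hc : (0:ℝ) ≤ (A.card : ℝ) := Nat.cast_nonneg _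
  nlinarith

set_option maxHeartbeats 1000000 in
lemma disjoint_supp_bound (hp : 0 < p) {C : ℝ} (hC1 : 1 ≤ C) (hrg : bs.IsRGPCCWith C)
    {cs : ℝ} (hcs0 : 0 ≤ cs) (hcs : ∀ (n : ℕ) (g : X), ‖bs.coord n g‖ ≤ cs * bs.N g)
    {ce : ℝ} (hce : ∀ n, bs.N (bs.e n) ≤ ce) (f g : X)
    (hdisj : Disjoint (bs.supp f) (bs.supp g)) :
    bs.N f ≤ C * bs.N (f + g) := by
  classical
  have hC0 : (0:ℝ) < C := lt_of_lt_of_le one_pos hC1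
  have hb0 : 0 ≤ C * bs.N (f + g) := mul_nonneg hC0.le (bs.N_nonneg _)
  rw [← Real.rpow_le_rpow_iff (bs.N_nonneg _) hb0 hp]
  apply le_of_forall_pos_le_add
  intro εp hεp
  have hcp : (0:ℝ) ≤ C ^ p := Real.rpow_nonneg hC0.le p
  set K : ℝ := 2 * C ^ p + 2 with hK
  have hK0 : (0:ℝ) < K := by positivity
  set η : ℝ := (εp / K) ^ (1 / p) with hηdef
  have hη : 0 < η := Real.rpow_pos_of_pos (div_pos hεp hK0) _
  have hηp : η ^ p = εp / K := by
    rw [hηdef, ← Real.rpow_mul (div_pos hεp hK0).le, one_div,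
      inv_mul_cancel₀ hp.ne', Real.rpow_one]
  have hηp0 : (0:ℝ) ≤ η ^ p := Real.rpow_nonneg hη.le p
  obtain ⟨g', hg'span, hg'N⟩ := bs.dense_span f η hη
  obtain ⟨T, hTrep, hTzero⟩ := bs.span_rep hg'span
  set A : Finset ℕ := T.filter (fun n => bs.coord n g = 0) with hAdef
  have hAT : A ⊆ T := Finset.filter_subset _ _
  have hcoordf0 : ∀ n ∈ T \ A, bs.coord n f = 0 := by
    intro n hn
    rw [Finset.mem_sdiff] at hn
    have hng : bs.coord n g ≠ 0 := by
      intro h0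
      exact hn.2 (Finset.mem_filter.2 ⟨hn.1, h0⟩)
    have : n ∉ bs.supp f := Set.disjoint_right.1 hdisj hng
    simpa [PBasis.supp] using this
  have hprojAfg : bs.proj A (f + g) = bs.proj A f := by
    apply Finset.sum_congr rfl
    intro n hn
    have hg0 : bs.coord n g = 0 := (Finset.mem_filter.1 hn).2
    rw [map_add, hg0, add_zero]
  have hsplit : g' - bs.proj A g' = bs.proj (T \ A) g' := by
    have hdis : Disjoint A (T \ A) := Finset.disjoint_sdiff
    have hun : A ∪ (T \ A) = T := Finset.union_sdiff_of_subset hAT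
    have : bs.proj A g' + bs.proj (T \ A) g' = g' := by
      rw [← bs.proj_union hdis, hun, ← hTrep]
    rw [sub_eq_iff_eq_add']
    exact this.symm
  have hprojTA : bs.proj (T \ A) g' = bs.proj (T \ A) (g' - f) := by
    apply Finset.sum_congr rfl
    intro n hn
    rw [map_sub, hcoordf0 n hn, sub_zero]
  have hid : f - bs.proj A f =
      (f - g') + bs.proj (T \ A) (g' - f) + bs.proj A (g' - f) := by
    rw [← hprojTA, ← hsplit, bs.proj_sub]
    abel
  have b1 : bs.N (bs.proj (T \ A) (g' - f)) ^ p ≤ C ^ p * η ^ p := by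
    have h1 : bs.N (bs.proj (T \ A) (g' - f)) ≤ C * η := by
      refine le_trans (bs.uncond hp hC1 hrg hcs0 hcs hce (T \ A) (g' - f)) ?_
      rw [bs.N_sub_comm]
      exact mul_le_mul_of_nonneg_left hg'N.le hC0.le
    have := Real.rpow_le_rpow (bs.N_nonneg _) h1 hp.le
    rwa [Real.mul_rpow hC0.le hη.le] at this
  have b2 : bs.N (bs.proj A (g' - f)) ^ p ≤ C ^ p * η ^ p := by
    have h
 : bs.N (bs.proj A (g' - f)) ≤ C * η := by
      refine le_trans (bs.uncond hp hC1 hrg hcs0 hcs hce A (g' - f)) ?_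
      rw [bs.N_sub_comm]
      exact mul_le_mul_of_nonneg_left hg'N.le hC0.le
    have := Real.rpow_le_rpow (bs.N_nonneg _) h hp.le
    rwa [Real.mul_rpow hC0.le hη.le] at this
  have b0 : bs.N (f - g') ^ p ≤ η ^ p :=
    Real.rpow_le_rpow (bs.N_nonneg _) hg'N.le hp.le
  have step1 : bs.N (f - bs.proj A f) ^ p ≤ η ^ p + 2 * (C ^ p * η ^ p) := by
    rw [hid]
    calc bs.N ((f - g') + bs.proj (T \ A) (g' - f) + bs.proj A (g' - f)) ^ p ≤
        bs.N ((f - g') + bs.proj (T \ A) (g' - f)) ^ p + bs.N (bs.proj A (g' - f)) ^ p :=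
          bs.N_padd _ _
      _ ≤ bs.N (f - g') ^ p + bs.N (bs.proj (T \ A) (g' - f)) ^ p +
          bs.N (bs.proj A (g' - f)) ^ p := by
          have := bs.N_padd (f - g') (bs.proj (T \ A) (g' - f))
          linarith
      _ ≤ η ^ p + 2 * (C ^ p * η ^ p) := by linarith
  have step2 : bs.N (bs.proj A f) ^ p ≤ C ^ p * bs.N (f + g) ^ p := by
    rw [← hprojAfg]
    have h1 : bs.N (bs.proj A (f + g)) ≤ C * bs.N (f + g) :=
      bs.uncond hp hC1 hrg hcs0 hcs hce A (f + g)
    have := Real.rpow_le_rpow (bs.N_nonneg _) h1 hp.le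
    rwa [Real.mul_rpow hC0.le (bs.N_nonneg _)] at this
  have step0 : bs.N f ^ p ≤ bs.N (f - bs.proj A f) ^ p + bs.N (bs.proj A f) ^ p :=
    bs.N_padd_sub hp f (bs.proj A f)
  have hfinal : η ^ p * (1 + 2 * C ^ p) ≤ εp := by
    rw [hηp, div_mul_eq_mul_div, div_le_iff₀ hK0]
    nlinarith
  rw [Real.mul_rpow hC0.le (bs.N_nonneg _)]
  nlinarith
end PBasis

/-- If a basis of a `p`-Banach space is `C_pg`-RGPCC, then it is unconditional
with unconditionality constant `K ≤ C_pg`; in particular `‖f‖ ≤ C_pg·‖f + g‖` whenever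
`f` and `g` have disjoint supports. -/
theorem RGPCC_implies_unconditional {𝕜 : Type*} [RCLike 𝕜] {X : Type*} [AddCommGroup X]
    [Module 𝕜 X] {p : ℝ} (hp : 0 < p) (hp1 : p ≤ 1) (bs : PBasis 𝕜 X p)
    (Cpg : ℝ) (hCpg : 0 < Cpg) (h : bs.IsRGPCCWith Cpg) :
    bs.IsUncondWith Cpg ∧
      ∀ f g : X, Disjoint (bs.supp f) (bs.supp g) → bs.N f ≤ Cpg * bs.N (f + g) := by
  have he0 : bs.coord 0 (bs.e 0) = 1 := by simpa using bs.biorth 0 0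
  have he0ne : bs.e 0 ≠ 0 := by
    intro h0
    rw [h0, map_zero] at he0
    exact one_ne_zero he0.symm
  have hNe0 : 0 < bs.N (bs.e 0) :=
    lt_of_le_of_ne (bs.N_nonneg _) fun h0 => he0ne ((bs.N_eq_zero_iff _).1 h0.symm)
  -- `1 ≤ Cpg`
  have hC1 : 1 ≤ Cpg := by
    have h0 := h (bs.e 0) ∅ ∅ (fun _ => (1 : 𝕜))
      (fun n hn => absurd hn (Finset.notMem_empty n)) rfl
      (fun j hj => absurd hj (Finset.notMem_empty j))
    simp only [PBasis.proj, PBasis.indSign, Finset.sum_empty, sub_zero, smul_zero] at h0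
    nlinarith
  obtain ⟨cs, hcs⟩ := bs.coord_bdd
  have hcs1 : (1:ℝ) ≤ cs * bs.N (bs.e 0) := by
    have := hcs 0 (bs.e 0)
    rwa [he0, norm_one] at this
  have hcs0 : 0 ≤ cs := by
    by_contra h'
    push_neg at h'
    nlinarith [mul_neg_of_neg_of_pos h' hNe0]
  obtain ⟨ce, hce⟩ := bs.e_bdd
  exact ⟨fun A f => bs.uncond hp hC1 h hcs0 hcs hce A f,
    fun f g hdisj => bs.disjoint_supp_bound hp hC1 h hcs0 hcs hce f g hdisj⟩
end
end

section
/- Let 0 < p ≤ 1, let X be a p-Banach space over 𝔽 = ℝ, and let 𝒳 be a basis of X that is C_pgu-URGPCC. Then 𝒳 is unconditional with unconditionality constant K ≤ C_pgu². -/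
open scoped BigOperators

noncomputable section

namespace PBasis

variable {X : Type*} [AddCommGroup X] [Module ℝ X] {p : ℝ}

lemma N_neg' (b : PBasis ℝ X p) (f : X) : b.N (-f) = b.N f := by
  have := b.N_smul (-1 : ℝ) f
  simpa using this

lemma coord_proj' (b : PBasis ℝ X p) (A : Finset ℕ) (f : X) (n : ℕ) :
    b.coord n (b.proj A f) = if n ∈ A then b.coord n f else 0 := by
  simp [PBasis.proj, map_sum, map_smul, b.biorth, smul_eq_mul, mul_ite, mul_one, mul_zero,
    Finset.sum_ite_eq]

lemma coord_ind' (b : PBasis ℝ X p) (A : Finset ℕ) (n : ℕ) :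
    b.coord n (b.ind A) = if n ∈ A then 1 else 0 := by
  simp [PBasis.ind, map_sum, b.biorth, Finset.sum_ite_eq]

lemma N_zero' (b : PBasis ℝ X p) : b.N 0 = 0 := (b.N_eq_zero_iff 0).mpr rfl

lemma N_sum_le (b : PBasis ℝ X p) (hp : 0 < p) {ι : Type*} (s : Finset ι) (g : ι → X) :
    b.N (∑ i ∈ s, g i) ^ p ≤ ∑ i ∈ s, b.N (g i) ^ p := by
  classical
  induction s using Finset.induction_on with
  | empty => simp [b.N_zero', Real.zero_rpow (ne_of_gt hp)]
  | insert a s hi ih =>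
    rw [Finset.sum_insert hi, Finset.sum_insert hi]
    exact le_trans (b.N_padd _ _) (by linarith)

lemma keyB (b : PBasis ℝ X p) {C : ℝ} (h : b.IsURGPCCWith C) (f : X)
    (H F : Finset ℕ) (hdisj : Disjoint H F) (hF : F.Nonempty)
    (hF0 : ∀ n ∈ F, b.coord n f = 0) (hH : ∀ n ∈ H, 0 ≤ b.coord n f)
    {t : ℝ} (ht : ∀ m, ‖b.coord m f‖ ≤ t) :
    b.N (f - b.proj H f) ≤ C * b.N f := by
  have ht0 : 0 ≤ t := le_trans (norm_nonneg _) (ht 0)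
  set G : Finset ℕ := H ∪ F with hG
  set z : X := f + t • b.ind G with hz
  have hcz : ∀ n, b.coord n z = b.coord n f + (if n ∈ G then t else 0) := by
    intro n
    rw [hz, map_add, map_smul, smul_eq_mul, b.coord_ind']
    simp [mul_ite]
  have hGnn : ∀ n ∈ G, 0 ≤ b.coord n f := by
    intro n hn
    rcases Finset.mem_union.mp hn with h1 | h1
    · exact hH n h1
    · exact le_of_eq (hF0 n h1).symm
  have hzin : ∀ n ∈ G, ‖b.coord n z‖ = b.coord n f + t := by
    intro n hn
    rw [hcz n, if_pos hn, Real.norm_eq_abs, abs_of_nonneg (by linarith [hGnn n hn])]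
  have hzout : ∀ m, m ∉ G → b.coord m z = b.coord m f := by
    intro m hm; rw [hcz m, if_neg hm, add_zero]
  have hgreedy : b.IsGreedySet z G := by
    intro n hn m hm
    rw [hzout m hm, hzin n hn]
    have := ht m
    linarith [hGnn n hn]
  have hmin : b.minCoef z G = t := by
    apply IsLeast.csInf_eq
    constructor
    · obtain ⟨n₀, hn₀⟩ := hF
      have hn₀G : n₀ ∈ G := Finset.mem_union_right H hn₀
      refine ⟨n₀, by simpa using hn₀G, ?_⟩
      show ‖b.coord n₀ z‖ = t
      rw [hzin n₀ hn₀G, hF0 n₀ hn₀, zero_add]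
    · rintro x ⟨n, hn, rfl⟩
      have hn' : n ∈ G := by simpa using hn
      show t ≤ ‖b.coord n z‖
      rw [hzin n hn']
      linarith [hGnn n hn']
  have happ : b.N (z - b.proj G z) ≤ C * b.N (z - b.minCoef z G • b.ind G) :=
    h z G G hgreedy rfl
  rw [hmin] at happ
  have h1 : z - b.proj G z = f - b.proj H f := by
    have hpz : b.proj G z = b.proj G f + t • b.ind G := by
      unfold PBasis.proj PBasis.ind
      rw [Finset.smul_sum, ← Finset.sum_add_distrib]
      refine Finset.sum_congr rfl (fun n hn => ?_)
      rw [hcz n, if_pos hn, add_smul]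
    have hpf : b.proj G f = b.proj H f := by
      unfold PBasis.proj
      rw [hG, Finset.sum_union hdisj]
      have hzero : ∑ n ∈ F, b.coord n f • b.e n = 0 :=
        Finset.sum_eq_zero (fun n hn => by rw [hF0 n hn, zero_smul])
      rw [hzero, add_zero]
    rw [hpz, hpf, hz]; abel
  have h2' : z - t • b.ind G = f := by rw [hz]; abel
  rwa [h1, h2'] at happ

lemma keyB' (b : PBasis ℝ X p) {C : ℝ} (h : b.IsURGPCCWith C) (f : X)
    (H F : Finset ℕ) (hdisj : Disjoint H F) (hF : F.Nonempty)
    (hF0 : ∀ n ∈ F, b.coord n f = 0) (hH : ∀ n ∈ H, b.coord n f ≤ 0)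
    {t : ℝ} (ht : ∀ m, ‖b.coord m f‖ ≤ t) :
    b.N (f - b.proj H f) ≤ C * b.N f := by
  have key := b.keyB h (-f) H F hdisj hF
    (fun n hn => by rw [map_neg, hF0 n hn, neg_zero])
    (fun n hn => by rw [map_neg]; linarith [hH n hn])
    (t := t) (fun m => by rw [map_neg, norm_neg]; exact ht m)
  have hproj : b.proj H (-f) = - b.proj H f := by
    simp [PBasis.proj, map_neg, neg_smul, Finset.sum_neg_distrib]
  have e1 : -f - b.proj H (-f) = -(f - b.proj H f) := by rw [hproj]; abel
  rwa [e1, b.N_neg', b.N_neg'] at key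

lemma finCase (b : PBasis ℝ X p) {C : ℝ} (hC : 0 ≤ C) (h : b.IsURGPCCWith C)
    (A S : Finset ℕ) (f : X) (hfS : b.proj S f = f) :
    b.N (b.proj A f) ≤ C ^ 2 * b.N f := by
  classical
  obtain ⟨c, hc⟩ := b.coord_bdd
  have hcoord0 : ∀ n, n ∉ S → b.coord n f = 0 := by
    intro n hn
    have := b.coord_proj' S f n
    rw [hfS, if_neg hn] at this
    exact this
  obtain ⟨n₀, hn₀⟩ := Infinite.exists_notMem_finset (S ∪ A)
  have hn₀S : n₀ ∉ S := fun hh => hn₀ (Finset.mem_union_left _ hh)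
  set P : Finset ℕ := (S \ A).filter (fun n => 0 ≤ b.coord n f) with hP
  set Q : Finset ℕ := (S \ A).filter (fun n => ¬ 0 ≤ b.coord n f) with hQ
  have hPS : P ⊆ S := Finset.Subset.trans (Finset.filter_subset _ _) (Finset.sdiff_subset)
  have hQS : Q ⊆ S := Finset.Subset.trans (Finset.filter_subset _ _) (Finset.sdiff_subset)
  set g : X := f - b.proj P f with hg
  have hcg : ∀ n, b.coord n g = if n ∈ P then 0 else b.coord n f := by
    intro n
    rw [hg, map_sub, b.coord_proj']
    split <;> simp
  have step1 : b.N g ≤ C * b.N f := by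
    refine b.keyB h f P {n₀} ?_ ⟨n₀, Finset.mem_singleton_self n₀⟩ ?_ ?_
      (t := c * b.N f) (fun m => hc m f)
    · rw [Finset.disjoint_singleton_right]
      exact fun hmem => hn₀S (hPS hmem)
    · intro n hn
      rw [Finset.mem_singleton] at hn
      rw [hn]
      exact hcoord0 n₀ hn₀S
    · intro n hn
      exact (Finset.mem_filter.mp hn).2
  have step2 : b.N (g - b.proj Q g) ≤ C * b.N g := by
    refine b.keyB' h g Q {n₀} ?_ ⟨n₀, Finset.mem_singleton_self n₀⟩ ?_ ?_
      (t := c * b.N g) (fun m => hc m g)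
    · rw [Finset.disjoint_singleton_right]
      exact fun hmem => hn₀S (hQS hmem)
    · intro n hn
      rw [Finset.mem_singleton] at hn
      rw [hn, hcg n₀, if_neg (fun hmem => hn₀S (hPS hmem))]
      exact hcoord0 n₀ hn₀S
    · intro n hn
      have hnP : n ∉ P := by
        intro hnp
        exact (Finset.mem_filter.mp hn).2 (Finset.mem_filter.mp hnp).2
      rw [hcg n, if_neg hnP]
      exact le_of_not_ge (Finset.mem_filter.mp hn).2
  have hQg : b.proj Q g = b.proj Q f := by
    unfold PBasis.proj
    refine Finset.sum_congr rfl (fun n hn => ?_)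
    have hnP : n ∉ P := by
      intro hnp
      exact (Finset.mem_filter.mp hn).2 (Finset.mem_filter.mp hnp).2
    rw [hcg n, if_neg hnP]
  have hPQ : b.proj P f + b.proj Q f = b.proj (S \ A) f := by
    unfold PBasis.proj
    rw [← Finset.sum_union (Finset.disjoint_filter_filter_not _ _ _)]
    congr 1
    exact Finset.filter_union_filter_not_eq _ _
  have hsplit : f = b.proj (S \ A) f + b.proj (S ∩ A) f := by
    conv_lhs => rw [← hfS]
    unfold PBasis.proj
    rw [← Finset.sum_union (Finset.disjoint_sdiff_inter S A), Finset.sdiff_union_inter]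
  have hAint : b.proj A f = b.proj (S ∩ A) f := by
    unfold PBasis.proj
    refine (Finset.sum_subset Finset.inter_subset_right ?_).symm
    intro n hnA hnSA
    have hnS : n ∉ S := fun hS => hnSA (Finset.mem_inter.mpr ⟨hS, hnA⟩)
    rw [hcoord0 n hnS, zero_smul]
  have hfinal : g - b.proj Q g = b.proj A f := by
    rw [hQg, hg, hAint]
    have h' : f - b.proj (S \ A) f = b.proj (S ∩ A) f :=
      sub_eq_of_eq_add (hsplit.trans (add_comm _ _))
    rw [← h', ← hPQ]
    abel
  calc b.N (b.proj A f) = b.N (g - b.proj Q g) := by rw [hfinal]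
    _ ≤ C * b.N g := step2
    _ ≤ C * (C * b.N f) := mul_le_mul_of_nonneg_left step1 hC
    _ = C ^ 2 * b.N f := by ring

lemma proj_of_subset (b : PBasis ℝ X p) {S T : Finset ℕ} (hST : S ⊆ T) {f : X}
    (hf : b.proj S f = f) : b.proj T f = f := by
  have hc : ∀ n, n ∉ S → b.coord n f = 0 := by
    intro n hn
    have := b.coord_proj' S f n
    rw [hf, if_neg hn] at this
    exact this
  calc b.proj T f = ∑ n ∈ S, b.coord n f • b.e n := by
        unfold PBasis.proj
        exact (Finset.sum_subset hST (fun n _ hn => by rw [hc n hn, zero_smul])).symm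
    _ = f := hf

lemma exists_proj_eq (b : PBasis ℝ X p) (f : X)
    (hf : f ∈ Submodule.span ℝ (Set.range b.e)) : ∃ S : Finset ℕ, b.proj S f = f := by
  induction hf using Submodule.span_induction with
  | mem x hx =>
    obtain ⟨m, rfl⟩ := hx
    exact ⟨{m}, by simp [PBasis.proj, b.biorth]⟩
  | zero => exact ⟨∅, by simp [PBasis.proj]⟩
  | add x y hx hy ihx ihy =>
    obtain ⟨S1, h1⟩ := ihx
    obtain ⟨S2, h2⟩ := ihy
    refine ⟨S1 ∪ S2, ?_⟩
    have e1 := b.proj_of_subset (Finset.subset_union_left (s₂ := S2)) h1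
    have e2 := b.proj_of_subset (Finset.subset_union_right (s₁ := S1)) h2
    have hadd : b.proj (S1 ∪ S2) (x + y) = b.proj (S1 ∪ S2) x + b.proj (S1 ∪ S2) y := by
      simp [PBasis.proj, map_add, add_smul, Finset.sum_add_distrib]
    rw [hadd, e1, e2]
  | smul r x hx ihx =>
    obtain ⟨S, hS⟩ := ihx
    refine ⟨S, ?_⟩
    have hsmul : b.proj S (r • x) = r • b.proj S x := by
      simp [PBasis.proj, map_smul, Finset.smul_sum, smul_smul, smul_eq_mul]
    rw [hsmul, hS]

end PBasis

/-- If a basis of a real `p`-Banach space is `C_pgu`-URGPCC, then it is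
unconditional with unconditionality constant `K ≤ C_pgu²`. -/
theorem URGPCC_implies_unconditional_real {X : Type*} [AddCommGroup X] [Module ℝ X]
    {p : ℝ} (hp : 0 < p) (hp1 : p ≤ 1) (bs : PBasis ℝ X p)
    (Cpgu : ℝ) (hCpgu : 0 < Cpgu) (h : bs.IsURGPCCWith Cpgu) :
    bs.IsUncondWith (Cpgu ^ 2) := by
  show ∀ (A : Finset ℕ) (f : X), bs.N (bs.proj A f) ≤ Cpgu ^ 2 * bs.N f
  intro A f
  obtain ⟨c, hc⟩ := bs.coord_bdd
  obtain ⟨ce, hce⟩ := bs.e_bdd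
  have hc0 : 0 < c := by
    by_contra hcc
    push_neg at hcc
    have h1 := hc 0 (bs.e 0)
    have h2 : ‖bs.coord 0 (bs.e 0)‖ = (1 : ℝ) := by rw [bs.biorth 0 0]; simp
    nlinarith [bs.N_nonneg (bs.e 0)]
  have hce0 : 0 ≤ ce := le_trans (bs.N_nonneg (bs.e 0)) (hce 0)
  set K : ℝ := (Cpgu ^ 2) ^ p + (A.card : ℝ) * (c * ce) ^ p with hK
  have hK0 : 0 ≤ K := by
    have t1 : (0:ℝ) ≤ (Cpgu ^ 2) ^ p := Real.rpow_nonneg (by positivity) p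
    have t2 : (0:ℝ) ≤ (c * ce) ^ p := Real.rpow_nonneg (by positivity) p
    have t3 : (0:ℝ) ≤ (A.card : ℝ) := Nat.cast_nonneg _
    rw [hK]
    nlinarith
  have hCp : 0 ≤ (Cpgu ^ 2) ^ p := Real.rpow_nonneg (by positivity) p
  have claim : ∀ ε : ℝ, 0 < ε →
      bs.N (bs.proj A f) ^ p ≤ (Cpgu ^ 2) ^ p * bs.N f ^ p + K * ε ^ p := by
    intro ε hε
    obtain ⟨g, hgspan, hgε⟩ := bs.dense_span f ε hε
    obtain ⟨S, hS⟩ := bs.exists_proj_eq g hgspan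
    have hfin : bs.N (bs.proj A g) ≤ Cpgu ^ 2 * bs.N g :=
      bs.finCase (by positivity) h A S g hS
    have hNfg : bs.N (f - g) ≤ ε := le_of_lt hgε
    have hNfg0 : 0 ≤ bs.N (f - g) := bs.N_nonneg _
    have hNg : bs.N g ^ p ≤ bs.N f ^ p + ε ^ p := by
      have h1 : bs.N g ^ p ≤ bs.N f ^ p + bs.N (g - f) ^ p := by
        have := bs.N_padd f (g - f)
        rwa [show f + (g - f) = g by abel] at this
      have h2 : bs.N (g - f) = bs.N (f - g) := by
        rw [show g - f = -(f - g) by abel, bs.N_neg']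
      have h3 : bs.N (f - g) ^ p ≤ ε ^ p := Real.rpow_le_rpow hNfg0 hNfg hp.le
      rw [h2] at h1
      linarith
    have hdiff : bs.N (bs.proj A f - bs.proj A g) ^ p
        ≤ (A.card : ℝ) * (c * ce) ^ p * ε ^ p := by
      have heq : bs.proj A f - bs.proj A g = ∑ n ∈ A, bs.coord n (f - g) • bs.e n := by
        simp [PBasis.proj, map_sub, sub_smul, Finset.sum_sub_distrib]
      rw [heq]
      refine le_trans (bs.N_sum_le hp A _) ?_
      have hterm : ∀ n ∈ A, bs.N (bs.coord n (f - g) • bs.e n) ^ p ≤ (c * ce) ^ p * ε ^ p := by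
        intro n _
        rw [bs.N_smul]
        have hb1 : ‖bs.coord n (f - g)‖ ≤ c * ε :=
          le_trans (hc n (f - g)) (mul_le_mul_of_nonneg_left hNfg hc0.le)
        have hb : ‖bs.coord n (f - g)‖ * bs.N (bs.e n) ≤ c * ce * ε := by
          calc ‖bs.coord n (f - g)‖ * bs.N (bs.e n) ≤ (c * ε) * ce :=
                mul_le_mul hb1 (hce n) (bs.N_nonneg _) (by positivity)
            _ = c * ce * ε := by ring
        have hr := Real.rpow_le_rpow (mul_nonneg (norm_nonneg _) (bs.N_nonneg _)) hb hp.le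
        rwa [Real.mul_rpow (by positivity) hε.le] at hr
      calc ∑ n ∈ A, bs.N (bs.coord n (f - g) • bs.e n) ^ p
          ≤ ∑ _n ∈ A, (c * ce) ^ p * ε ^ p := Finset.sum_le_sum hterm
        _ = (A.card : ℝ) * ((c * ce) ^ p * ε ^ p) := by
            rw [Finset.sum_const, nsmul_eq_mul]
        _ = (A.card : ℝ) * (c * ce) ^ p * ε ^ p := by ring
    have hmain : bs.N (bs.proj A f) ^ p
        ≤ bs.N (bs.proj A g) ^ p + bs.N (bs.proj A f - bs.proj A g) ^ p := by
      have := bs.N_padd (bs.proj A g) (bs.proj A f - bs.proj A g)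
      rwa [show bs.proj A g + (bs.proj A f - bs.proj A g) = bs.proj A f by abel] at this
    have hAg : bs.N (bs.proj A g) ^ p ≤ (Cpgu ^ 2) ^ p * bs.N g ^ p := by
      have h4 : bs.N (bs.proj A g) ^ p ≤ (Cpgu ^ 2 * bs.N g) ^ p :=
        Real.rpow_le_rpow (bs.N_nonneg _) hfin hp.le
      rwa [Real.mul_rpow (by positivity) (bs.N_nonneg _)] at h4
    have h5 := mul_le_mul_of_nonneg_left hNg hCp
    calc bs.N (bs.proj A f) ^ p
        ≤ bs.N (bs.proj A g) ^ p + bs.N (bs.proj A f - bs.proj A g) ^ p := hmain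
      _ ≤ (Cpgu ^ 2) ^ p * (bs.N f ^ p + ε ^ p) + (A.card : ℝ) * (c * ce) ^ p * ε ^ p := by
          linarith
      _ = (Cpgu ^ 2) ^ p * bs.N f ^ p + K * ε ^ p := by rw [hK]; ring
  have hfin2 : bs.N (bs.proj A f) ^ p ≤ (Cpgu ^ 2) ^ p * bs.N f ^ p := by
    by_contra hcon
    push_neg at hcon
    set δ : ℝ := bs.N (bs.proj A f) ^ p - (Cpgu ^ 2) ^ p * bs.N f ^ p with hδ
    have hδ0 : 0 < δ := by rw [hδ]; linarith
    have hd0 : 0 < δ / (K + 1) := div_pos hδ0 (by linarith)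
    set ε : ℝ := (δ / (K + 1)) ^ (1 / p) with hεdef
    have hε0 : 0 < ε := Real.rpow_pos_of_pos hd0 _
    have hεp : ε ^ p = δ / (K + 1) := by
      rw [hεdef, ← Real.rpow_mul hd0.le, one_div_mul_cancel (ne_of_gt hp), Real.rpow_one]
    have hcl := claim ε hε0
    rw [hεp] at hcl
    have hKlt : K * (δ / (K + 1)) < δ := by
      rw [show K * (δ / (K + 1)) = K * δ / (K + 1) from by ring,
        div_lt_iff₀ (by linarith : (0:ℝ) < K + 1)]
      nlinarith
    linarith
  by_contra hcon
  push_neg at hcon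
  have h5 : (Cpgu ^ 2 * bs.N f) ^ p < bs.N (bs.proj A f) ^ p :=
    Real.rpow_lt_rpow (mul_nonneg (by positivity) (bs.N_nonneg f)) hcon hp
  rw [Real.mul_rpow (by positivity) (bs.N_nonneg f)] at h5
  linarith
end
end
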